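/- Let A = k[[x,y]] be the formal power series ring over an algebraically closed field k of characteristic p > 0, and let D be the derivation D = a·x·∂/∂x + b·y·∂/∂y with a, b ∈ F_p, a + b = 0, and a ≠ 0. Then the ring of D-invariants A^D equals k[[x^p, xy, y^p]], which is isomorphic to k[[u,v,w]]/(uw - v^p), a rational double point of type A_{p-1}. -/

import Mathlib

open MvPowerSeries

set_option linter.unusedSectionVars false
namespace Apm1

variable (p : ℕ) [hp : Fact p.Prime]

noncomputable def mk3 (a b c : ℕ) : Fin 3 →₀ ℕ :=
  Finsupp.single 0 a + Finsupp.single 1 b + Finsupp.single 2 c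

@[simp] lemma mk3_app0 (a b c : ℕ) : mk3 a b c 0 = a := by
  simp [mk3, Finsupp.single_apply]
@[simp] lemma mk3_app1 (a b c : ℕ) : mk3 a b c 1 = b := by
  simp [mk3, Finsupp.single_apply]
@[simp] lemma mk3_app2 (a b c : ℕ) : mk3 a b c 2 = c := by
  simp [mk3, Finsupp.single_apply]

lemma mk3_eta (e : Fin 3 →₀ ℕ) : mk3 (e 0) (e 1) (e 2) = e := by
  ext i; fin_cases i <;> simp

noncomputable def mk2 (a b : ℕ) : Fin 2 →₀ ℕ := Finsupp.single 0 a + Finsupp.single 1 b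

@[simp] lemma mk2_app0 (a b : ℕ) : mk2 a b 0 = a := by
  simp [mk2, Finsupp.single_apply]
@[simp] lemma mk2_app1 (a b : ℕ) : mk2 a b 1 = b := by
  simp [mk2, Finsupp.single_apply]

lemma mk2_eta (d : Fin 2 →₀ ℕ) : mk2 (d 0) (d 1) = d := by
  ext i; fin_cases i <;> simp

/-- exponent map: (i,j,l) ↦ (p i + j, j + p l), corresponding to u ↦ x^p, v ↦ xy, w ↦ y^p -/
noncomputable def sig (e : Fin 3 →₀ ℕ) : Fin 2 →₀ ℕ := mk2 (p * e 0 + e 1) (e 1 + p * e 2)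

@[simp] lemma sig_app0 (e : Fin 3 →₀ ℕ) : sig p e 0 = p * e 0 + e 1 := by simp [sig]
@[simp] lemma sig_app1 (e : Fin 3 →₀ ℕ) : sig p e 1 = e 1 + p * e 2 := by simp [sig]

lemma sig_add (e e' : Fin 3 →₀ ℕ) : sig p (e + e') = sig p e + sig p e' := by
  ext i; fin_cases i <;> simp [Finsupp.add_apply] <;> ring

@[simp] lemma sig_zero : sig p 0 = 0 := by
  ext i; fin_cases i <;> simp

lemma sig_eqns {e e' : Fin 3 →₀ ℕ} (h : sig p e = sig p e') :
    p * e 0 + e 1 = p * e' 0 + e' 1 ∧ e 1 + p * e 2 = e' 1 + p * e' 2 := by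
  constructor
  · have := DFunLike.congr_fun h (0 : Fin 2); simpa using this
  · have := DFunLike.congr_fun h (1 : Fin 2); simpa using this

lemma fib_finite (d : Fin 2 →₀ ℕ) : {e : Fin 3 →₀ ℕ | sig p e = d}.Finite := by
  have hp0 : 0 < p := hp.out.pos
  apply Set.Finite.subset
    ((Set.finite_Iic (d 0)).image (fun j => mk3 ((d 0 - j) / p) j ((d 1 - j) / p)))
  intro e he
  have h0 : p * e 0 + e 1 = d 0 := by
    have := DFunLike.congr_fun he (0 : Fin 2); simpa using this
  have h1 : e 1 + p * e 2 = d 1 := by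
    have := DFunLike.congr_fun he (1 : Fin 2); simpa using this
  refine ⟨e 1, by simp; omega, ?_⟩
  have e0 : (d 0 - e 1) / p = e 0 := by
    have : d 0 - e 1 = p * e 0 := by omega
    rw [this, Nat.mul_div_cancel_left _ hp0]
  have e2 : (d 1 - e 1) / p = e 2 := by
    have : d 1 - e 1 = p * e 2 := by omega
    rw [this, Nat.mul_div_cancel_left _ hp0]
  dsimp only; rw [e0, e2, mk3_eta]

noncomputable def fib (d : Fin 2 →₀ ℕ) : Finset (Fin 3 →₀ ℕ) := (fib_finite p d).toFinset

lemma mem_fib {d : Fin 2 →₀ ℕ} {e : Fin 3 →₀ ℕ} : e ∈ fib p d ↔ sig p e = d :=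
  Set.Finite.mem_toFinset _

end Apm1

namespace Apm1

variable (p : ℕ) [hp : Fact p.Prime] (k : Type*) [Field k]

noncomputable def psiFun (F : MvPowerSeries (Fin 3) k) : MvPowerSeries (Fin 2) k :=
  fun d => ∑ e ∈ fib p d, coeff e F

lemma coeff_psiFun (F : MvPowerSeries (Fin 3) k) (d : Fin 2 →₀ ℕ) :
    coeff d (psiFun p k F) = ∑ e ∈ fib p d, coeff e F := rfl

lemma psiFun_monomial (m : Fin 3 →₀ ℕ) (c : k) :
    psiFun p k (monomial m c) = monomial (sig p m) c := by
  ext d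
  rw [coeff_psiFun, coeff_monomial]
  have : ∀ e ∈ fib p d, coeff e (monomial m c) = if e = m then c else 0 :=
    fun e _ => coeff_monomial e m c
  rw [Finset.sum_congr rfl this, Finset.sum_ite_eq' (fib p d) m (fun _ => c)]
  congr 1
  simp only [mem_fib, eq_iff_iff]
  exact ⟨fun h => h.symm, fun h => h.symm⟩

/-- pairs (e₁,e₂) with sig e₁ + sig e₂ = d -/
noncomputable def fib2 (d : Fin 2 →₀ ℕ) : Finset ((Fin 3 →₀ ℕ) × (Fin 3 →₀ ℕ)) :=
  (Finset.HasAntidiagonal.antidiagonal d).biUnion fun q => fib p q.1 ×ˢ fib p q.2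

lemma mem_fib2 {d : Fin 2 →₀ ℕ} {x : (Fin 3 →₀ ℕ) × (Fin 3 →₀ ℕ)} :
    x ∈ fib2 p d ↔ sig p x.1 + sig p x.2 = d := by
  constructor
  · intro hx
    obtain ⟨q, hq, hx⟩ := Finset.mem_biUnion.mp hx
    obtain ⟨h1, h2⟩ := Finset.mem_product.mp hx
    rw [mem_fib] at h1 h2
    rw [h1, h2]
    exact Finset.HasAntidiagonal.mem_antidiagonal.mp hq
  · intro h
    refine Finset.mem_biUnion.mpr ⟨(sig p x.1, sig p x.2), Finset.HasAntidiagonal.mem_antidiagonal.mpr h, ?_⟩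
    exact Finset.mem_product.mpr ⟨(mem_fib p).mpr rfl, (mem_fib p).mpr rfl⟩

lemma psiFun_mul (F G : MvPowerSeries (Fin 3) k) :
    psiFun p k (F * G) = psiFun p k F * psiFun p k G := by
  classical
  ext d
  -- LHS
  have hL : coeff d (psiFun p k (F * G)) = ∑ x ∈ fib2 p d, coeff x.1 F * coeff x.2 G := by
    rw [coeff_psiFun]
    have hmap : ∀ x ∈ fib2 p d, x.1 + x.2 ∈ fib p d := by
      intro x hx
      rw [mem_fib, sig_add]
      exact (mem_fib2 p).mp hx
    rw [← Finset.sum_fiberwise_of_maps_to hmap (fun x => coeff x.1 F * coeff x.2 G)]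
    refine Finset.sum_congr rfl fun e he => ?_
    rw [coeff_mul]
    refine Finset.sum_congr ?_ (fun _ _ => rfl)
    ext x
    constructor
    · intro hx
      have h := Finset.HasAntidiagonal.mem_antidiagonal.mp hx
      refine Finset.mem_filter.mpr ⟨(mem_fib2 p).mpr ?_, h⟩
      rw [← sig_add, h]
      exact (mem_fib p).mp he
    · intro hx
      exact Finset.HasAntidiagonal.mem_antidiagonal.mpr (Finset.mem_filter.mp hx).2
  -- RHS
  have hR : coeff d (psiFun p k F * psiFun p k G)
      = ∑ x ∈ fib2 p d, coeff x.1 F * coeff x.2 G := by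
    rw [coeff_mul]
    have hmap : ∀ x ∈ fib2 p d, (sig p x.1, sig p x.2) ∈ Finset.HasAntidiagonal.antidiagonal d := by
      intro x hx
      rw [Finset.HasAntidiagonal.mem_antidiagonal]
      exact (mem_fib2 p).mp hx
    rw [← Finset.sum_fiberwise_of_maps_to hmap (fun x => coeff x.1 F * coeff x.2 G)]
    refine Finset.sum_congr rfl fun q hq => ?_
    rw [coeff_psiFun, coeff_psiFun, Finset.sum_mul_sum]
    rw [← Finset.sum_product']
    refine Finset.sum_congr ?_ (fun _ _ => rfl)
    ext x
    constructor
    · intro hx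
      obtain ⟨h1, h2⟩ := Finset.mem_product.mp hx
      rw [mem_fib] at h1 h2
      refine Finset.mem_filter.mpr ⟨(mem_fib2 p).mpr ?_, ?_⟩
      · rw [h1, h2]
        exact Finset.HasAntidiagonal.mem_antidiagonal.mp hq
      · rw [h1, h2]
    · intro hx
      have hxq := (Finset.mem_filter.mp hx).2
      have h1 : sig p x.1 = q.1 := by rw [← hxq]
      have h2 : sig p x.2 = q.2 := by rw [← hxq]
      exact Finset.mem_product.mpr ⟨(mem_fib p).mpr h1, (mem_fib p).mpr h2⟩
  rw [hL, hR]

lemma psiFun_one : psiFun p k (1 : MvPowerSeries (Fin 3) k) = 1 := by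
  rw [← monomial_zero_one, psiFun_monomial, sig_zero, monomial_zero_one]

lemma psiFun_add (F G : MvPowerSeries (Fin 3) k) :
    psiFun p k (F + G) = psiFun p k F + psiFun p k G := by
  ext d
  simp [coeff_psiFun, map_add, Finset.sum_add_distrib]

lemma psiFun_C (c : k) : psiFun p k (C c) = (C c : MvPowerSeries (Fin 2) k) := by
  have h1 : (C c : MvPowerSeries (Fin 3) k) = monomial (0 : Fin 3 →₀ ℕ) c := rfl
  have h2 : (C c : MvPowerSeries (Fin 2) k) = monomial (0 : Fin 2 →₀ ℕ) c := rfl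
  rw [h1, h2, psiFun_monomial, sig_zero]

noncomputable def psi : MvPowerSeries (Fin 3) k →ₐ[k] MvPowerSeries (Fin 2) k :=
  { toFun := psiFun p k
    map_one' := psiFun_one p k
    map_mul' := psiFun_mul p k
    map_zero' := by ext d; simp [coeff_psiFun]
    map_add' := psiFun_add p k
    commutes' := fun c => by
      simp only [MvPowerSeries.algebraMap_apply]
      exact psiFun_C p k c }

@[simp] lemma psi_apply (F : MvPowerSeries (Fin 3) k) : psi p k F = psiFun p k F := rfl

end Apm1

namespace Apm1

variable (p : ℕ) [hp : Fact p.Prime] (k : Type*) [Field k]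

lemma X_mul_X_eq : (X 0 * X 2 : MvPowerSeries (Fin 3) k)
    = monomial (mk3 1 0 1) 1 := by
  rw [X_def, X_def, monomial_mul_monomial, one_mul]
  have h : (Finsupp.single (0 : Fin 3) 1 + Finsupp.single 2 1) = mk3 1 0 1 := by
    ext i; fin_cases i <;> simp [Finsupp.single_apply]
  rw [h]

lemma X_pow_eq' : ((X 1) ^ p : MvPowerSeries (Fin 3) k) = monomial (mk3 0 p 0) 1 := by
  rw [X_pow_eq]
  have h : (Finsupp.single (1 : Fin 3) p) = mk3 0 p 0 := by
    ext i; fin_cases i <;> simp [Finsupp.single_apply]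
  rw [h]

lemma psi_g : psi p k (X 0 * X 2 - (X 1) ^ p) = 0 := by
  rw [map_sub, psi_apply, psi_apply, X_mul_X_eq, X_pow_eq', psiFun_monomial, psiFun_monomial]
  rw [sub_eq_zero]
  have h : sig p (mk3 1 0 1) = sig p (mk3 0 p 0) := by
    ext i; fin_cases i <;> simp [mul_comm]
  rw [h]

end Apm1

namespace Apm1

variable (p : ℕ) [hp : Fact p.Prime] (k : Type*) [Field k]

/-- partial sums used for the quotient -/
noncomputable def Aq (F : MvPowerSeries (Fin 3) k) (i j l : ℕ) : k :=
  ∑ t ∈ Finset.range (j / p + 1), coeff (mk3 (i + (t+1)) (j - p*t) (l + (t+1))) F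

noncomputable def QF (F : MvPowerSeries (Fin 3) k) : MvPowerSeries (Fin 3) k :=
  fun e => Aq p k F (e 0) (e 1) (e 2)

noncomputable def Rsum (F : MvPowerSeries (Fin 3) k) (i j l : ℕ) : k :=
  ∑ m ∈ Finset.range (j / p + 1), coeff (mk3 (i + m) (j - p*m) (l + m)) F

noncomputable def RF (F : MvPowerSeries (Fin 3) k) : MvPowerSeries (Fin 3) k :=
  fun e => if min (e 0) (e 2) = 0 then Rsum p k F (e 0) (e 1) (e 2) else 0

lemma coeff_QF (F : MvPowerSeries (Fin 3) k) (e : Fin 3 →₀ ℕ) :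
    coeff e (QF p k F) = Aq p k F (e 0) (e 1) (e 2) := rfl

lemma coeff_RF (F : MvPowerSeries (Fin 3) k) (e : Fin 3 →₀ ℕ) :
    coeff e (RF p k F) =
      if min (e 0) (e 2) = 0 then Rsum p k F (e 0) (e 1) (e 2) else 0 := rfl

/-- the core arithmetic identity, stated componentwise -/
lemma key_arith (F : MvPowerSeries (Fin 3) k) (i j l : ℕ) :
    (if 1 ≤ i ∧ 1 ≤ l then Aq p k F (i-1) j (l-1) else 0)
      - (if p ≤ j then Aq p k F i (j-p) l else 0)
    = coeff (mk3 i j l) F - (if min i l = 0 then Rsum p k F i j l else 0) := by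
  have hp0 : 0 < p := hp.out.pos
  have hsumsub : ∀ (i' l' : ℕ), p ≤ j → Aq p k F i' (j - p) l'
      = ∑ t ∈ Finset.range (j / p), coeff (mk3 (i' + (t+1)) (j - p*(t+1)) (l' + (t+1))) F := by
    intro i' l' hpj
    have hdiv : j / p = (j - p) / p + 1 := Nat.div_eq_sub_div hp0 hpj
    rw [Aq, ← hdiv]
    refine Finset.sum_congr rfl fun t _ => ?_
    have harg : j - p - p * t = j - p * (t + 1) := by
      have : p * (t + 1) = p * t + p := by ring
      omega
    rw [harg]
  by_cases hmin : min i l = 0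
  · -- reduced case
    have hnot : ¬ (1 ≤ i ∧ 1 ≤ l) := by omega
    rw [if_neg hnot, if_pos hmin, zero_sub]
    have hR : Rsum p k F i j l
        = (∑ m ∈ Finset.range (j / p), coeff (mk3 (i + (m+1)) (j - p*(m+1)) (l + (m+1))) F)
          + coeff (mk3 i j l) F := by
      rw [Rsum, Finset.sum_range_succ']
      norm_num
    by_cases hpj : p ≤ j
    · rw [if_pos hpj, hsumsub i l hpj, hR]
      ring
    · rw [if_neg hpj, hR]
      have h0 : j / p = 0 := Nat.div_eq_of_lt (by omega)
      rw [h0]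
      simp
  · -- non-reduced case
    have hyes : 1 ≤ i ∧ 1 ≤ l := by omega
    rw [if_pos hyes, if_neg hmin, sub_zero]
    have hA : Aq p k F (i-1) j (l-1)
        = (∑ t ∈ Finset.range (j / p), coeff (mk3 (i + (t+1)) (j - p*(t+1)) (l + (t+1))) F)
          + coeff (mk3 i j l) F := by
      rw [Aq]
      have hc : ∀ t : ℕ, mk3 (i - 1 + (t+1)) (j - p*t) (l - 1 + (t+1))
          = mk3 (i + t) (j - p*t) (l + t) := by
        intro t
        have e1 : i - 1 + (t+1) = i + t := by omega
        have e2 : l - 1 + (t+1) = l + t := by omega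
        rw [e1, e2]
      rw [Finset.sum_congr rfl fun t _ => by rw [hc t]]
      rw [Finset.sum_range_succ']
      norm_num
    by_cases hpj : p ≤ j
    · rw [if_pos hpj, hsumsub i l hpj, hA]
      ring
    · rw [if_neg hpj, hA]
      have h0 : j / p = 0 := Nat.div_eq_of_lt (by omega)
      rw [h0]
      simp

lemma key_identity (F : MvPowerSeries (Fin 3) k) :
    (X 0 * X 2 - (X 1) ^ p : MvPowerSeries (Fin 3) k) * QF p k F = F - RF p k F := by
  ext e
  rw [map_sub, sub_mul, map_sub, X_mul_X_eq, X_pow_eq', coeff_monomial_mul, coeff_monomial_mul,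
    coeff_RF]
  have h1 : (mk3 1 0 1 ≤ e) ↔ (1 ≤ e 0 ∧ 1 ≤ e 2) := by
    rw [Finsupp.le_def]
    constructor
    · intro h; exact ⟨by simpa using h 0, by simpa using h 2⟩
    · intro h i; fin_cases i <;> simp [h.1, h.2]
  have h2 : (mk3 0 p 0 ≤ e) ↔ (p ≤ e 1) := by
    rw [Finsupp.le_def]
    constructor
    · intro h; simpa using h 1
    · intro h i; fin_cases i <;> simp [h]
  have c1 : coeff (e - mk3 1 0 1) (QF p k F) = Aq p k F (e 0 - 1) (e 1) (e 2 - 1) := by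
    rw [coeff_QF]
    simp [Finsupp.tsub_apply]
  have c2 : coeff (e - mk3 0 p 0) (QF p k F) = Aq p k F (e 0) (e 1 - p) (e 2) := by
    rw [coeff_QF]
    simp [Finsupp.tsub_apply]
  have hk := key_arith p k F (e 0) (e 1) (e 2)
  rw [mk3_eta] at hk
  rw [← hk]
  congr 1
  · by_cases h : 1 ≤ e 0 ∧ 1 ≤ e 2
    · rw [if_pos (h1.mpr h), if_pos h, one_mul, c1]
    · rw [if_neg (fun hh => h (h1.mp hh)), if_neg h]
  · by_cases h : p ≤ e 1
    · rw [if_pos (h2.mpr h), if_pos h, one_mul, c2]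
    · rw [if_neg (fun hh => h (h2.mp hh)), if_neg h]

end Apm1

namespace Apm1

variable (p : ℕ) [hp : Fact p.Prime] (k : Type*) [Field k]

lemma fib_param {e e' : Fin 3 →₀ ℕ} (hmin : min (e 0) (e 2) = 0)
    (h : sig p e' = sig p e) :
    ∃ m : ℕ, p * m ≤ e 1 ∧ e' 0 = e 0 + m ∧ e' 1 = e 1 - p * m ∧ e' 2 = e 2 + m := by
  have hp0 : 0 < p := hp.out.pos
  obtain ⟨h0, h1⟩ := sig_eqns p h
  rcases Nat.min_eq_zero_iff.mp hmin with he0 | he2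
  · -- e 0 = 0
    rw [he0, Nat.mul_zero, Nat.zero_add] at h0
    refine ⟨e' 0, ?_, ?_, ?_, ?_⟩
    · omega
    · omega
    · omega
    · -- p * e' 2 = p * e 2 + p * e' 0
      have hmul : p * e' 2 = p * (e 2 + e' 0) := by
        rw [Nat.mul_add]
        omega
      have := Nat.eq_of_mul_eq_mul_left hp0 hmul
      omega
  · -- e 2 = 0
    rw [he2, Nat.mul_zero, Nat.add_zero] at h1
    refine ⟨e' 2, ?_, ?_, ?_, ?_⟩
    · omega
    · -- e' 0 = e 0 + e' 2
      have hmul : p * e' 0 = p * (e 0 + e' 2) := by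
        rw [Nat.mul_add]
        omega
      have := Nat.eq_of_mul_eq_mul_left hp0 hmul
      omega
    · omega
    · omega

lemma tower_mem {e : Fin 3 →₀ ℕ} {m : ℕ} (hm : p * m ≤ e 1) :
    sig p (mk3 (e 0 + m) (e 1 - p * m) (e 2 + m)) = sig p e := by
  ext i; fin_cases i <;> simp [Nat.mul_add] <;> omega

lemma Rsum_eq_fib_sum (F : MvPowerSeries (Fin 3) k) {e : Fin 3 →₀ ℕ}
    (hmin : min (e 0) (e 2) = 0) :
    Rsum p k F (e 0) (e 1) (e 2) = ∑ e' ∈ fib p (sig p e), coeff e' F := by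
  have hp0 : 0 < p := hp.out.pos
  rw [Rsum]
  refine Finset.sum_nbij' (fun m => mk3 (e 0 + m) (e 1 - p*m) (e 2 + m))
    (fun e' => e' 0 - e 0) ?_ ?_ ?_ ?_ ?_
  · intro m hm
    rw [mem_fib]
    have hm' : m ≤ e 1 / p := Nat.lt_succ_iff.mp (Finset.mem_range.mp hm)
    have : p * m ≤ e 1 := by
      calc p * m = m * p := Nat.mul_comm _ _
      _ ≤ (e 1 / p) * p := Nat.mul_le_mul_right p hm'
      _ ≤ e 1 := Nat.div_mul_le_self _ _
    exact tower_mem p this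
  · intro e' he'
    rw [mem_fib] at he'
    obtain ⟨m, hm, h0, h1, h2⟩ := fib_param p hmin he'
    show _
    rw [Finset.mem_range, Nat.lt_succ_iff, h0]
    have hcan : e 0 + m - e 0 = m := by omega
    rw [hcan]
    exact Nat.le_div_iff_mul_le hp0 |>.mpr (by rw [Nat.mul_comm]; omega)
  · intro m _
    show _
    rw [mk3_app0]
    omega
  · intro e' he'
    rw [mem_fib] at he'
    obtain ⟨m, hm, h0, h1, h2⟩ := fib_param p hmin he'
    show _
    have hm' : e' 0 - e 0 = m := by omega
    rw [hm']
    have g0 : e 0 + m = e' 0 := by omega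
    have g1 : e 1 - p * m = e' 1 := by omega
    have g2 : e 2 + m = e' 2 := by omega
    rw [g0, g1, g2, mk3_eta]
  · intro m _
    rfl

lemma RF_eq_zero_of_psi_eq_zero {F : MvPowerSeries (Fin 3) k}
    (hF : psi p k F = 0) : RF p k F = 0 := by
  ext e
  rw [coeff_RF]
  by_cases hmin : min (e 0) (e 2) = 0
  · rw [if_pos hmin, Rsum_eq_fib_sum p k F hmin]
    have : coeff (sig p e) (psi p k F) = 0 := by rw [hF]; simp
    rw [psi_apply, coeff_psiFun] at this
    rw [this]
    simp
  · rw [if_neg hmin]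
    simp

lemma dvd_of_psi_eq_zero {F : MvPowerSeries (Fin 3) k}
    (hF : psi p k F = 0) :
    (X 0 * X 2 - (X 1) ^ p : MvPowerSeries (Fin 3) k) ∣ F := by
  refine ⟨QF p k F, ?_⟩
  rw [key_identity, RF_eq_zero_of_psi_eq_zero p k hF, sub_zero]

end Apm1

namespace Apm1

variable (p : ℕ) [hp : Fact p.Prime] (k : Type*) [Field k]

/-- canonical preimage of an exponent -/
noncomputable def can (d : Fin 2 →₀ ℕ) : Fin 3 →₀ ℕ :=
  if d 0 ≤ d 1 then mk3 0 (d 0) ((d 1 - d 0) / p) else mk3 ((d 0 - d 1) / p) (d 1) 0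

lemma sig_can {d : Fin 2 →₀ ℕ} (h : (d 0 : ZMod p) = (d 1 : ZMod p)) :
    sig p (can p d) = d := by
  have hmod : d 0 ≡ d 1 [MOD p] := (ZMod.natCast_eq_natCast_iff _ _ _).mp h
  rw [can]
  by_cases hle : d 0 ≤ d 1
  · have hdvd : p ∣ d 1 - d 0 := (Nat.modEq_iff_dvd' hle).mp hmod
    rw [if_pos hle]
    ext i
    fin_cases i <;> simp [Nat.mul_div_cancel' hdvd] <;> omega
  · have hle' : d 1 ≤ d 0 := by omega
    have hdvd : p ∣ d 0 - d 1 := (Nat.modEq_iff_dvd' hle').mp hmod.symm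
    rw [if_neg hle]
    ext i
    fin_cases i <;> simp [Nat.mul_div_cancel' hdvd] <;> omega

lemma sig_cond (e : Fin 3 →₀ ℕ) : ((sig p e 0 : ZMod p)) = (sig p e 1 : ZMod p) := by
  push_cast [sig_app0, sig_app1]
  simp [ZMod.natCast_self]

lemma range_psi :
    Set.range (psi p k) =
      {f : MvPowerSeries (Fin 2) k |
        ∀ d : Fin 2 →₀ ℕ, coeff d f ≠ 0 → (d 0 : ZMod p) = (d 1 : ZMod p)} := by
  ext f
  constructor
  · rintro ⟨F, rfl⟩ d hd
    rw [psi_apply, coeff_psiFun] at hd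
    obtain ⟨e, he, -⟩ := Finset.exists_ne_zero_of_sum_ne_zero hd
    rw [mem_fib] at he
    rw [← he]
    exact sig_cond p e
  · intro hf
    classical
    refine ⟨fun e => if can p (sig p e) = e then coeff (sig p e) f else 0, ?_⟩
    ext d
    show ∑ e ∈ fib p d, coeff e (fun e => if can p (sig p e) = e then coeff (sig p e) f else 0 : MvPowerSeries (Fin 3) k) = coeff d f
    have hterm : ∀ e ∈ fib p d,
        coeff e (fun e => if can p (sig p e) = e then coeff (sig p e) f else 0 :
          MvPowerSeries (Fin 3) k)
        = if can p d = e then coeff d f else 0 := by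
      intro e he
      rw [mem_fib] at he
      show (if can p (sig p e) = e then coeff (sig p e) f else 0) = _
      rw [he]
    rw [Finset.sum_congr rfl hterm, Finset.sum_ite_eq (fib p d) (can p d) (fun _ => coeff d f)]
    by_cases hc : (d 0 : ZMod p) = (d 1 : ZMod p)
    · rw [if_pos ((mem_fib p).mpr (sig_can p hc))]
    · have h0 : coeff d f = 0 := by
        by_contra hne
        exact hc (hf d hne)
      rw [h0]
      simp

/-- the submonoid of exponents with congruent coordinates -/
noncomputable def Mcong : AddSubmonoid (Fin 2 →₀ ℕ) where
  carrier := {d | (d 0 : ZMod p) = (d 1 : ZMod p)}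
  zero_mem' := by simp
  add_mem' := by
    intro x y hx hy
    simp only [Set.mem_setOf_eq, Finsupp.add_apply, Nat.cast_add] at *
    rw [hx, hy]

lemma closure_eq :
    AddSubmonoid.closure
        ({Finsupp.single 0 p, Finsupp.single 0 1 + Finsupp.single 1 1,
          Finsupp.single 1 p} : Set (Fin 2 →₀ ℕ)) = Mcong p := by
  apply le_antisymm
  · rw [AddSubmonoid.closure_le]
    intro x hx
    rcases hx with h | h | h <;> subst h <;>
      simp [Mcong, Finsupp.single_apply, ZMod.natCast_self]
  · intro d hd
    have hc : (d 0 : ZMod p) = (d 1 : ZMod p) := hd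
    have hmod : d 0 ≡ d 1 [MOD p] := (ZMod.natCast_eq_natCast_iff _ _ _).mp hc
    by_cases hle : d 0 ≤ d 1
    · have hdvd : p ∣ d 1 - d 0 := (Nat.modEq_iff_dvd' hle).mp hmod
      have hrep : d = d 0 • (Finsupp.single 0 1 + Finsupp.single 1 1)
          + ((d 1 - d 0) / p) • (Finsupp.single 1 p : Fin 2 →₀ ℕ) := by
        ext i
        fin_cases i <;>
          simp [Finsupp.smul_apply, Finsupp.single_apply, Nat.div_mul_cancel hdvd] <;> omega
      rw [hrep]
      exact add_mem
        (AddSubmonoid.nsmul_mem _ (AddSubmonoid.subset_closure (by simp)) _)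
        (AddSubmonoid.nsmul_mem _ (AddSubmonoid.subset_closure (by simp)) _)
    · have hle' : d 1 ≤ d 0 := by omega
      have hdvd : p ∣ d 0 - d 1 := (Nat.modEq_iff_dvd' hle').mp hmod.symm
      have hrep : d = d 1 • (Finsupp.single 0 1 + Finsupp.single 1 1)
          + ((d 0 - d 1) / p) • (Finsupp.single 0 p : Fin 2 →₀ ℕ) := by
        ext i
        fin_cases i <;>
          simp [Finsupp.smul_apply, Finsupp.single_apply, Nat.div_mul_cancel hdvd] <;> omega
      rw [hrep]
      exact add_mem
        (AddSubmonoid.nsmul_mem _ (AddSubmonoid.subset_closure (by simp)) _)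
        (AddSubmonoid.nsmul_mem _ (AddSubmonoid.subset_closure (by simp)) _)

end Apm1

/-- Let `A = k[[x,y]]` with `k` algebraically closed of characteristic `p > 0`, and let
`D = a·x·∂/∂x + b·y·∂/∂y` with `a, b ∈ 𝔽_p`, `a + b = 0`, `a ≠ 0`; concretely, `D` is the
`k`-linear operator multiplying the coefficient of `x^i y^j` by `a·i + b·j ∈ 𝔽_p ⊆ k`.
Then the invariant ring `A^D = {f | D f = 0}` equals `k[[x^p, xy, y^p]]` (the series
supported on the monoid of exponents generated by `(p,0)`, `(1,1)`, `(0,p)`), and it is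
isomorphic as a `k`-algebra to `k[[u,v,w]]/(uw - v^p)`, a rational double point of type
`A_{p-1}`. -/
theorem invariants_of_symplectic_derivation_Apminus1
    (k : Type*) [Field k] [IsAlgClosed k] (p : ℕ) [Fact p.Prime] [CharP k p]
    (a b : ZMod p) (hab : a + b = 0) (ha : a ≠ 0)
    (D : MvPowerSeries (Fin 2) k →ₗ[k] MvPowerSeries (Fin 2) k)
    (hD : ∀ (f : MvPowerSeries (Fin 2) k) (d : Fin 2 →₀ ℕ),
      coeff d (D f) =
        (ZMod.castHom (dvd_refl p) k) (a * (d 0 : ZMod p) + b * (d 1 : ZMod p)) *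
          coeff d f) :
    ({f : MvPowerSeries (Fin 2) k | D f = 0} =
      {f : MvPowerSeries (Fin 2) k | ∀ d : Fin 2 →₀ ℕ, coeff d f ≠ 0 →
        d ∈ AddSubmonoid.closure
          ({Finsupp.single 0 p, Finsupp.single 0 1 + Finsupp.single 1 1,
            Finsupp.single 1 p} : Set (Fin 2 →₀ ℕ))}) ∧
    ∃ φ : (MvPowerSeries (Fin 3) k ⧸
            Ideal.span {(X 0 * X 2 - (X 1) ^ p : MvPowerSeries (Fin 3) k)}) →ₐ[k]
          MvPowerSeries (Fin 2) k,
      Function.Injective φ ∧ Set.range φ = {f : MvPowerSeries (Fin 2) k | D f = 0} := by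
  have hzero : ∀ d : Fin 2 →₀ ℕ,
      ((ZMod.castHom (dvd_refl p) k) (a * (d 0 : ZMod p) + b * (d 1 : ZMod p)) = 0)
        ↔ ((d 0 : ZMod p) = (d 1 : ZMod p)) := by
    intro d
    rw [map_eq_zero_iff _ (ZMod.castHom (dvd_refl p) k).injective]
    constructor
    · intro h
      have hb : b = -a := by linear_combination hab
      rw [hb] at h
      have h' : a * ((d 0 : ZMod p) - (d 1 : ZMod p)) = 0 := by linear_combination h
      rcases mul_eq_zero.mp h' with h'' | h''
      · exact absurd h'' ha
      · exact sub_eq_zero.mp h''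
    · intro h
      rw [h]
      linear_combination ((d 1 : ZMod p)) * hab
  have hclos : ∀ d : Fin 2 →₀ ℕ,
      (d ∈ AddSubmonoid.closure
        ({Finsupp.single 0 p, Finsupp.single 0 1 + Finsupp.single 1 1,
          Finsupp.single 1 p} : Set (Fin 2 →₀ ℕ)))
        ↔ ((d 0 : ZMod p) = (d 1 : ZMod p)) := by
    intro d
    rw [Apm1.closure_eq]
    exact Iff.rfl
  have part1 : {f : MvPowerSeries (Fin 2) k | D f = 0} =
      {f : MvPowerSeries (Fin 2) k |
        ∀ d : Fin 2 →₀ ℕ, coeff d f ≠ 0 → (d 0 : ZMod p) = (d 1 : ZMod p)} := by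
    ext f
    simp only [Set.mem_setOf_eq]
    constructor
    · intro hDf d hd
      have h := hD f d
      rw [hDf] at h
      rw [map_zero] at h
      rcases mul_eq_zero.mp h.symm with h' | h'
      · exact (hzero d).mp h'
      · exact absurd h' hd
    · intro hf
      apply MvPowerSeries.ext
      intro d
      rw [hD f d, MvPowerSeries.coeff_zero]
      by_cases hc : coeff d f = 0
      · rw [hc, mul_zero]
      · rw [(hzero d).mpr (hf d hc), zero_mul]
  constructor
  · rw [part1]
    ext f
    simp only [Set.mem_setOf_eq]
    constructor
    · intro hf d hd
      exact (hclos d).mpr (hf d hd)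
    · intro hf d hd
      exact (hclos d).mp (hf d hd)
  · -- part 2
    have hann : ∀ x ∈ Ideal.span {(X 0 * X 2 - (X 1) ^ p : MvPowerSeries (Fin 3) k)},
        Apm1.psi p k x = 0 := by
      intro x hx
      obtain ⟨y, rfl⟩ := Ideal.mem_span_singleton.mp hx
      rw [map_mul, Apm1.psi_g, zero_mul]
    refine ⟨Ideal.Quotient.liftₐ _ (Apm1.psi p k) hann, ?_, ?_⟩
    · rw [injective_iff_map_eq_zero]
      intro x hx
      obtain ⟨F, rfl⟩ := Ideal.Quotient.mk_surjective x
      change Apm1.psi p k F = 0 at hx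
      exact Ideal.Quotient.eq_zero_iff_mem.mpr
        (Ideal.mem_span_singleton.mpr (Apm1.dvd_of_psi_eq_zero p k hx))
    · rw [part1]
      ext f
      constructor
      · rintro ⟨x, rfl⟩
        obtain ⟨F, rfl⟩ := Ideal.Quotient.mk_surjective x
        change Apm1.psi p k F ∈ _
        have hmem : (Apm1.psi p k) F ∈ Set.range (Apm1.psi p k) := ⟨F, rfl⟩
        rw [Apm1.range_psi] at hmem
        exact hmem
      · intro hf
        have hmem : f ∈ Set.range (Apm1.psi p k) := by
          rw [Apm1.range_psi]
          exact hf
        obtain ⟨F, rfl⟩ := hmem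
        refine ⟨Ideal.Quotient.mk _ F, ?_⟩
        change Apm1.psi p k F = _
        rfl
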